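/- Let R be a domain, n ≥ 1, and B = R[x₁^{±1},…,xₙ^{±1}] the Laurent polynomial ring in n variables over R. Let M be a submonoid of ℤⁿ and R[M] the R-subalgebra of B generated by the monomials x^a with a ∈ M. If R[M] is pre-factorially closed in B, then the monoid M is normal: for every positive integer m and every a in the subgroup ⟨M⟩ of ℤⁿ generated by M, if m·a ∈ M then a ∈ M. -/

import Mathlib

/-- An `R`-subalgebra `A` of `B` is pre-factorially closed (pfc) in `B`. -/
def IsPfc {R B : Type*} [CommSemiring R] [CommRing B] [Algebra R B] (A : Subalgebra R B) : Prop :=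
  ∀ a b : B, a ≠ 0 → b ≠ 0 → a * b ∈ A →
    ∃ u : Bˣ, (u : B) * a ∈ A ∧ ((u⁻¹ : Bˣ) : B) * b ∈ A

/-- For a submonoid `M ⊆ ℤⁿ`, the `R`-subalgebra `R[M]` of the Laurent polynomial ring. -/
noncomputable def monomialSubalgebra (R : Type*) [CommRing R] {n : ℕ}
    (M : AddSubmonoid (Fin n → ℤ)) : Subalgebra R (AddMonoidAlgebra R (Fin n → ℤ)) :=
  Algebra.adjoin R (AddMonoidAlgebra.of' R (Fin n → ℤ) '' (M : Set (Fin n → ℤ)))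

section Aux

variable {R : Type*} [CommRing R] {n : ℕ}

/-- Every element of `R[M]` has support contained in `M`. -/
lemma aux_support_subset (M : AddSubmonoid (Fin n → ℤ))
    {f : AddMonoidAlgebra R (Fin n → ℤ)} (hf : f ∈ monomialSubalgebra R M) :
    ∀ s ∈ f.coeff.support, s ∈ M := by
  classical
  let S : Subalgebra R (AddMonoidAlgebra R (Fin n → ℤ)) :=
  { carrier := {f : AddMonoidAlgebra R (Fin n → ℤ) | ∀ s ∈ f.coeff.support, s ∈ M}
    mul_mem' := by
      intro f g hf hg s hs
      obtain ⟨a, ha, b, hb, rfl⟩ := Finset.mem_add.mp (AddMonoidAlgebra.support_coeff_mul_subset f g hs)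
      exact M.add_mem (hf a ha) (hg b hb)
    add_mem' := by
      intro f g hf hg s hs
      rw [AddMonoidAlgebra.coeff_add] at hs
      rcases Finset.mem_union.mp (Finsupp.support_add hs) with h | h
      exacts [hf s h, hg s h]
    one_mem' := by
      intro s hs
      rw [AddMonoidAlgebra.one_def] at hs
      have := Finsupp.support_single_subset hs
      simp only [Finset.mem_singleton] at this
      exact this ▸ M.zero_mem
    algebraMap_mem' := by
      intro r s hs
      rw [AddMonoidAlgebra.coe_algebraMap] at hs
      have := Finsupp.support_single_subset hs
      simp only [Finset.mem_singleton] at this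
      exact this ▸ M.zero_mem }
  have hle : monomialSubalgebra R M ≤ S := by
    apply Algebra.adjoin_le
    rintro _ ⟨a, haM, rfl⟩ s hs
    rw [AddMonoidAlgebra.of'_apply] at hs
    have := Finsupp.support_single_subset hs
    simp only [Finset.mem_singleton] at this
    exact this ▸ haM
  exact hle hf

/-- Coefficient of a product at a "uniquely realized" point of the sum of supports. -/
lemma aux_mul_apply (u v : AddMonoidAlgebra R (Fin n → ℤ)) {p q : Fin n → ℤ}
    (hp : p ∈ u.coeff.support) (hq : q ∈ v.coeff.support)
    (h : ∀ a ∈ u.coeff.support, ∀ b ∈ v.coeff.support, a + b = p + q → a = p) :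
    (u * v).coeff (p + q) = u.coeff p * v.coeff q := by
  classical
  rw [AddMonoidAlgebra.coeff_mul]
  simp only [Finsupp.sum]
  have h1 : ∀ a ∈ u.coeff.support,
      (∑ b ∈ v.coeff.support, if a + b = p + q then u.coeff a * v.coeff b else 0)
        = if a = p then u.coeff p * v.coeff q else 0 := by
    intro a ha
    by_cases hap : a = p
    · subst hap
      rw [if_pos rfl]
      have : ∀ b ∈ v.coeff.support, (if a + b = a + q then u.coeff a * v.coeff b else 0)
          = if b = q then u.coeff a * v.coeff b else 0 := by
        intro b _
        simp [add_right_inj]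
      rw [Finset.sum_congr rfl this, Finset.sum_ite_eq' v.coeff.support q (fun b => u.coeff a * v.coeff b),
        if_pos hq]
    · rw [if_neg hap]
      apply Finset.sum_eq_zero
      intro b hb
      rw [if_neg]
      intro hcontra
      exact hap (h a ha b hb hcontra)
  rw [Finset.sum_congr rfl h1, Finset.sum_ite_eq' u.coeff.support p (fun _ => u.coeff p * v.coeff q), if_pos hp]

/-- Units of the Laurent polynomial ring over a domain are single monomials. -/
lemma aux_unit_single [IsDomain R] {u v : AddMonoidAlgebra R (Fin n → ℤ)}
    (h : u * v = 1) :
    ∃ (c : Fin n → ℤ) (r s : R), r * s = 1 ∧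
      u = AddMonoidAlgebra.single c r ∧ v = AddMonoidAlgebra.single (-c) s := by
  classical
  letI : WellFoundedLT (Fin n) := inferInstance
  haveI lexinst : IsOrderedCancelAddMonoid (Lex (Fin n → ℤ)) := inferInstance
  have hu0 : u ≠ 0 := by
    rintro rfl
    rw [zero_mul] at h
    exact zero_ne_one h
  have hv0 : v ≠ 0 := by
    rintro rfl
    rw [mul_zero] at h
    exact zero_ne_one h
  have hadd : ∀ x y : Fin n → ℤ, toLex (x + y) = toLex x + toLex y := fun _ _ => rfl
  obtain ⟨p, hp, hpmax⟩ := u.coeff.support.exists_max_image (fun a => toLex a)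
    (Finsupp.support_nonempty_iff.mpr (AddMonoidAlgebra.coeff_eq_zero.not.mpr hu0))
  obtain ⟨q, hq, hqmax⟩ := v.coeff.support.exists_max_image (fun a => toLex a)
    (Finsupp.support_nonempty_iff.mpr (AddMonoidAlgebra.coeff_eq_zero.not.mpr hv0))
  obtain ⟨p', hp', hpmin⟩ := u.coeff.support.exists_min_image (fun a => toLex a)
    (Finsupp.support_nonempty_iff.mpr (AddMonoidAlgebra.coeff_eq_zero.not.mpr hu0))
  obtain ⟨q', hq', hqmin⟩ := v.coeff.support.exists_min_image (fun a => toLex a)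
    (Finsupp.support_nonempty_iff.mpr (AddMonoidAlgebra.coeff_eq_zero.not.mpr hv0))
  -- the max coefficient of the product
  have keymax : (u * v).coeff (p + q) = u.coeff p * v.coeff q := by
    apply aux_mul_apply u v hp hq
    intro a ha b hb hab
    by_contra hne
    have h1 : toLex a < toLex p := lt_of_le_of_ne (hpmax a ha) (fun he => hne (toLex.injective he))
    have h2 : toLex b ≤ toLex q := hqmax b hb
    have : toLex a + toLex b < toLex p + toLex q := add_lt_add_of_lt_of_le h1 h2
    rw [← hadd, ← hadd, hab] at this
    exact lt_irrefl _ this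
  have keymin : (u * v).coeff (p' + q') = u.coeff p' * v.coeff q' := by
    apply aux_mul_apply u v hp' hq'
    intro a ha b hb hab
    by_contra hne
    have h1 : toLex p' < toLex a := lt_of_le_of_ne (hpmin a ha) (fun he => hne (toLex.injective he.symm))
    have h2 : toLex q' ≤ toLex b := hqmin b hb
    have : toLex p' + toLex q' < toLex a + toLex b := add_lt_add_of_lt_of_le h1 h2
    rw [← hadd, ← hadd, hab] at this
    exact lt_irrefl _ this
  have hupvq : u.coeff p * v.coeff q ≠ 0 :=
    mul_ne_zero (Finsupp.mem_support_iff.mp hp) (Finsupp.mem_support_iff.mp hq)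
  have hupvq' : u.coeff p' * v.coeff q' ≠ 0 :=
    mul_ne_zero (Finsupp.mem_support_iff.mp hp') (Finsupp.mem_support_iff.mp hq')
  -- p + q = 0 and p' + q' = 0
  have hone : ∀ x : Fin n → ℤ, (1 : AddMonoidAlgebra R (Fin n → ℤ)).coeff x ≠ 0 → x = 0 := by
    intro x hx
    rw [AddMonoidAlgebra.one_def] at hx
    by_contra hne
    rw [AddMonoidAlgebra.coeff_single, Finsupp.single_apply, if_neg (fun he => hne he.symm)] at hx
    exact hx rfl
  have hpq : p + q = 0 := hone _ (by rw [← h]; rw [keymax]; exact hupvq)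
  have hpq' : p' + q' = 0 := hone _ (by rw [← h]; rw [keymin]; exact hupvq')
  -- p = p' and q = q'
  have hsum : toLex p + toLex q = toLex p' + toLex q' := by
    rw [← hadd, ← hadd, hpq, hpq']
  have hpp' : toLex p = toLex p' := by
    refine le_antisymm ?_ (hpmax p' hp')
    have h1 : toLex p + toLex q' ≤ toLex p + toLex q := add_le_add_right (hqmin q hq) _
    rw [hsum] at h1
    exact le_of_add_le_add_right h1
  have hqq' : toLex q = toLex q' := by
    refine le_antisymm ?_ (hqmax q' hq')
    have h1 : toLex p' + toLex q ≤ toLex p + toLex q := add_le_add_left (hpmin p hp) _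
    rw [hsum] at h1
    exact le_of_add_le_add_left h1
  -- supports are singletons
  have hsuppu : u.coeff.support = {p} := by
    apply Finset.eq_singleton_iff_unique_mem.mpr
    refine ⟨hp, fun x hx => toLex.injective (le_antisymm (hpmax x hx) (hpp' ▸ hpmin x hx))⟩
  have hsuppv : v.coeff.support = {q} := by
    apply Finset.eq_singleton_iff_unique_mem.mpr
    refine ⟨hq, fun x hx => toLex.injective (le_antisymm (hqmax x hx) (hqq' ▸ hqmin x hx))⟩
  have hu : u = AddMonoidAlgebra.single p (u.coeff p) :=
    AddMonoidAlgebra.coeff_injective (Finsupp.support_eq_singleton.mp hsuppu).2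
  have hv : v = AddMonoidAlgebra.single q (v.coeff q) :=
    AddMonoidAlgebra.coeff_injective (Finsupp.support_eq_singleton.mp hsuppv).2
  have hqneg : q = -p := eq_neg_of_add_eq_zero_right hpq
  refine ⟨p, u.coeff p, v.coeff q, ?_, hu, hqneg ▸ hv⟩
  have := keymax
  rw [hpq, h] at this
  rw [← this, AddMonoidAlgebra.one_def, AddMonoidAlgebra.coeff_single, Finsupp.single_eq_same]

end Aux

/-- If `R[M]` is pfc in `B = R[x₁^{±1},…,xₙ^{±1}]`, then the monoid `M` is normal:
whenever `m • a ∈ M` for some positive integer `m` and `a ∈ ⟨M⟩`, then `a ∈ M`. -/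
theorem monomialSubalgebra_isPfc_normal (R : Type*) [CommRing R] [IsDomain R]
    (n : ℕ) (hn : 1 ≤ n) (M : AddSubmonoid (Fin n → ℤ))
    (hpfc : IsPfc (monomialSubalgebra R M)) :
    ∀ (m : ℕ), 0 < m → ∀ a ∈ AddSubgroup.closure (M : Set (Fin n → ℤ)),
      m • a ∈ M → a ∈ M := by
  classical
  intro m hm a _ha hma
  by_cases ha0 : a = 0
  · simpa [ha0] using M.zero_mem
  set B := AddMonoidAlgebra R (Fin n → ℤ)
  set s : B := AddMonoidAlgebra.single a (1 : R) with hs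
  set f : B := s - 1 with hf_def
  set g : B := ∑ i ∈ Finset.range m, s ^ i with hg_def
  have hpow : ∀ k : ℕ, s ^ k = AddMonoidAlgebra.single (k • a) (1 : R) := by
    intro k
    rw [hs, AddMonoidAlgebra.single_pow, one_pow]
  -- f * g ∈ R[M]
  have hfg : f * g = AddMonoidAlgebra.single (m • a) (1 : R) - 1 := by
    rw [hf_def, hg_def, mul_comm, geom_sum_mul, hpow]
  have hprodmem : f * g ∈ monomialSubalgebra R M := by
    rw [hfg]
    refine sub_mem ?_ (one_mem _)
    exact Algebra.subset_adjoin ⟨m • a, hma, AddMonoidAlgebra.of'_apply _⟩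
  -- f ≠ 0
  have hf0 : f ≠ 0 := by
    intro h0
    have : f.coeff a = (1 : R) := by
      rw [hf_def, AddMonoidAlgebra.coeff_sub, Finsupp.sub_apply, AddMonoidAlgebra.one_def, hs,
        AddMonoidAlgebra.coeff_single, AddMonoidAlgebra.coeff_single, Finsupp.single_eq_same, Finsupp.single_apply, if_neg (fun he => ha0 he.symm), sub_zero]
    rw [h0] at this
    simp at this
  -- g ≠ 0
  have hg0 : g ≠ 0 := by
    intro h0
    have : g.coeff 0 = (1 : R) := by
      rw [hg_def, AddMonoidAlgebra.coeff_sum, Finset.sum_apply']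
      rw [Finset.sum_eq_single 0]
      · rw [hpow, zero_smul, AddMonoidAlgebra.coeff_single, Finsupp.single_eq_same]
      · intro i _ hi
        rw [hpow, AddMonoidAlgebra.coeff_single, Finsupp.single_apply, if_neg]
        intro he
        rcases smul_eq_zero.mp he with h' | h'
        · exact hi h'
        · exact ha0 h'
      · intro h'
        exact absurd (Finset.mem_range.mpr hm) h'
    rw [h0] at this
    simp at this
  obtain ⟨U, h1, h2⟩ := hpfc f g hf0 hg0 hprodmem
  have hUV : (U : B) * ((U⁻¹ : Bˣ) : B) = 1 := by
    rw [← Units.val_mul, mul_inv_cancel, Units.val_one]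
  obtain ⟨c, r, r', hrr, hU, hUinv⟩ := aux_unit_single hUV
  have hr : r ≠ 0 := left_ne_zero_of_mul_eq_one hrr
  have hr' : r' ≠ 0 := right_ne_zero_of_mul_eq_one hrr
  -- c + a ∈ M
  have hmem1 : c + a ∈ M := by
    apply aux_support_subset M h1
    rw [hU]
    have hexp : AddMonoidAlgebra.single c r * f
        = AddMonoidAlgebra.single (c + a) r - AddMonoidAlgebra.single c r := by
      rw [hf_def, mul_sub, hs, AddMonoidAlgebra.one_def, AddMonoidAlgebra.single_mul_single,
        AddMonoidAlgebra.single_mul_single, mul_one, add_zero]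
    rw [hexp]
    apply Finsupp.mem_support_iff.mpr
    rw [AddMonoidAlgebra.coeff_sub, Finsupp.sub_apply, AddMonoidAlgebra.coeff_single,
      AddMonoidAlgebra.coeff_single, Finsupp.single_eq_same, Finsupp.single_apply,
      if_neg (fun he : c = c + a => ha0 (by simpa using he.symm)), sub_zero]
    exact hr
  -- -c ∈ M
  have hmem2 : -c ∈ M := by
    apply aux_support_subset M h2
    rw [hUinv]
    have hexp : AddMonoidAlgebra.single (-c) r' * g
        = ∑ i ∈ Finset.range m, AddMonoidAlgebra.single (-c + i • a) r' := by
      rw [hg_def, Finset.mul_sum]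
      refine Finset.sum_congr rfl (fun i _ => ?_)
      rw [hpow, AddMonoidAlgebra.single_mul_single, mul_one]
    rw [hexp]
    apply Finsupp.mem_support_iff.mpr
    rw [AddMonoidAlgebra.coeff_sum, Finset.sum_apply']
    rw [Finset.sum_eq_single 0]
    · rw [zero_smul, add_zero, AddMonoidAlgebra.coeff_single, Finsupp.single_eq_same]
      exact hr'
    · intro i _ hi
      rw [AddMonoidAlgebra.coeff_single, Finsupp.single_apply, if_neg]
      intro he
      have : i • a = 0 := add_eq_left.mp he
      rcases smul_eq_zero.mp this with h' | h'
      · exact hi h'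
      · exact ha0 h'
    · intro h'
      exact absurd (Finset.mem_range.mpr hm) h'
  have : (c + a) + -c ∈ M := M.add_mem hmem1 hmem2
  have he : (c + a) + -c = a := by abel
  rwa [he] at this
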